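/- For each fixed complex a with |a − 1| < 1, the coefficient sequence D_{2n}(a) satisfies D_{2n}(a) · √(π n³) / 4^n → a/(a−2)² as n → ∞. -/

import Mathlib

open Filter Real

open Topology Nat in

lemma central_asym :
    Tendsto (fun n : ℕ => ((2 * n).choose n : ℝ) * Real.sqrt (π * n) / 4 ^ n) atTop (𝓝 1) := by
  have hπ : (0:ℝ) < π := Real.pi_pos
  have key : Tendsto (fun n : ℕ => Real.sqrt π * Stirling.stirlingSeq (2 * n) /
      (Stirling.stirlingSeq n) ^ 2) atTop (𝓝 1) := by
    have h2 : Tendsto (fun n : ℕ => Stirling.stirlingSeq (2 * n)) atTop (𝓝 (Real.sqrt π)) :=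
      Stirling.tendsto_stirlingSeq_sqrt_pi.comp (tendsto_id.const_mul_atTop' two_pos)
    have h3 : Tendsto (fun n : ℕ => (Stirling.stirlingSeq n) ^ 2) atTop (𝓝 ((Real.sqrt π) ^ 2)) :=
      Stirling.tendsto_stirlingSeq_sqrt_pi.pow 2
    have := (h2.const_mul (Real.sqrt π)).div h3 (by positivity)
    convert this using 2
    rw [sq]
    · simp [Pi.div_apply, sq]
    rw [sq]
    rw [div_self (by positivity : Real.sqrt π * Real.sqrt π ≠ 0)]
  refine key.congr' ?_
  filter_upwards [eventually_ge_atTop 1] with n hn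
  have hn0 : (0:ℝ) < n := by exact_mod_cast hn
  have hfact : ((2*n).choose n : ℝ) * (n)! * (n)! = ((2*n))! := by
    have := Nat.choose_mul_factorial_mul_factorial (show n ≤ 2*n by omega)
    have h2 : 2*n - n = n := by omega
    rw [h2] at this
    exact_mod_cast this
  have hs : Stirling.stirlingSeq (2*n)
      = (((2*n))! : ℝ) / (Real.sqrt (2*((2*n:ℕ):ℝ)) * (((2*n:ℕ):ℝ)/Real.exp 1)^(2*n)) := rfl
  have hsn : Stirling.stirlingSeq n = ((n)! : ℝ) / (Real.sqrt (2*n) * ((n:ℝ)/Real.exp 1)^n) := rfl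
  have hfpos : (0:ℝ) < (n)! := by exact_mod_cast Nat.factorial_pos n
  have hepos : (0:ℝ) < Real.exp 1 := Real.exp_pos 1
  have hsqrt2n : Real.sqrt (2*(2*(n:ℝ))) = 2 * Real.sqrt n := by
    rw [show (2:ℝ)*(2*n) = 2^2*n by ring, Real.sqrt_mul (by positivity), Real.sqrt_sq (by norm_num)]
  have hsqrtpin : Real.sqrt (π * n) = Real.sqrt π * Real.sqrt n := Real.sqrt_mul hπ.le n
  have hpow : ((2*(n:ℝ))/Real.exp 1)^(2*n) = 4^n * (((n:ℝ)/Real.exp 1)^n)^2 := by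
    rw [show (2*(n:ℝ))/Real.exp 1 = 2 * ((n:ℝ)/Real.exp 1) by ring, mul_pow, ← pow_mul, pow_mul,
      mul_comm 2 n, pow_mul]
    norm_num
  have hsqn : (0:ℝ) < Real.sqrt n := Real.sqrt_pos.mpr hn0
  have hmul : Real.sqrt (n:ℝ) * Real.sqrt (n:ℝ) = (n:ℝ) := Real.mul_self_sqrt hn0.le
  rw [hs, hsn, ← hfact]
  push_cast
  rw [hsqrt2n, hsqrtpin, hpow]
  have h1 : (0:ℝ) < ((n:ℝ)^n/Real.exp 1^n) := by positivity
  field_simp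
  ring_nf
  rw [Real.sq_sqrt (by positivity), Real.sq_sqrt (by positivity)]
  ring

open Topology Nat in
open Topology Nat in
lemma ratio_tendsto (c d : ℝ) :
    Tendsto (fun n : ℕ => ((n:ℝ) + c) / ((n:ℝ) + d)) atTop (𝓝 1) := by
  have hc : Tendsto (fun n : ℕ => c / (n:ℝ)) atTop (𝓝 0) := tendsto_const_div_atTop_nhds_zero_nat c
  have hd : Tendsto (fun n : ℕ => d / (n:ℝ)) atTop (𝓝 0) := tendsto_const_div_atTop_nhds_zero_nat d
  have h := (((tendsto_const_nhds : Tendsto (fun _ : ℕ => (1:ℝ)) atTop (𝓝 1)).add hc).div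
      ((tendsto_const_nhds : Tendsto (fun _ : ℕ => (1:ℝ)) atTop (𝓝 1)).add hd)
      (by norm_num : (1:ℝ) + 0 ≠ 0))
  norm_num at h
  refine h.congr' ?_
  filter_upwards [eventually_ge_atTop (⌈|d|⌉₊ + 1)] with n hn
  have h1 : |d| < (n:ℝ) := by
    calc |d| ≤ ⌈|d|⌉₊ := Nat.le_ceil _
    _ < n := by exact_mod_cast Nat.lt_of_lt_of_le (Nat.lt_succ_self _) hn
  have hn0 : (0:ℝ) < n := lt_of_le_of_lt (abs_nonneg d) h1
  have hnd : (n:ℝ) + d ≠ 0 := by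
    have := neg_lt_of_abs_lt h1
    linarith
  have hn0' : (n:ℝ) ≠ 0 := hn0.ne'
  simp only [Pi.div_apply]
  field_simp

open Topology Nat in
lemma choose_asym (ℓ : ℕ) :
    Tendsto (fun n : ℕ => ((2 * n).choose (n + ℓ) : ℝ) * Real.sqrt (π * n) / 4 ^ n) atTop
      (𝓝 1) := by
  induction ℓ with
  | zero =>
    simpa using central_asym
  | succ ℓ ih =>
    have hr : Tendsto (fun n : ℕ => ((n:ℝ) + (-(ℓ:ℝ))) / ((n:ℝ) + ((ℓ:ℝ) + 1))) atTop (𝓝 1) :=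
      ratio_tendsto _ _
    have h := ih.mul hr
    rw [mul_one] at h
    refine h.congr' ?_
    filter_upwards [eventually_ge_atTop (ℓ + 1)] with n hn
    have hℓn : ℓ ≤ n := by omega
    have hkey : ((2*n).choose (n + ℓ + 1) : ℝ) * ((n:ℝ) + ℓ + 1)
        = ((2*n).choose (n + ℓ) : ℝ) * ((n:ℝ) - ℓ) := by
      have h0 := Nat.choose_succ_right_eq (2*n) (n + ℓ)
      have h1 : 2*n - (n + ℓ) = n - ℓ := by omega
      rw [h1] at h0
      have h2 : ((n - ℓ : ℕ) : ℝ) = (n:ℝ) - ℓ := by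
        push_cast [hℓn]; ring
      calc ((2*n).choose (n + ℓ + 1) : ℝ) * ((n:ℝ) + ℓ + 1)
          = (((2*n).choose (n + ℓ + 1) * (n + ℓ + 1) : ℕ) : ℝ) := by push_cast; ring
        _ = (((2*n).choose (n + ℓ) * (n - ℓ) : ℕ) : ℝ) := Nat.cast_inj.mpr h0
        _ = ((2*n).choose (n + ℓ) : ℝ) * ((n:ℝ) - ℓ) := by rw [Nat.cast_mul, h2]
    have hden : ((n:ℝ) + ℓ + 1) ≠ 0 := by positivity
    have : ((2*n).choose (n + (ℓ+1)) : ℝ) = ((2*n).choose (n + ℓ) : ℝ) * ((n:ℝ) - ℓ) / ((n:ℝ) + ℓ + 1) := by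
      rw [← hkey, show n + (ℓ+1) = n + ℓ + 1 by omega]
      field_simp
    rw [this]
    ring

/-- The adsorbing Dyck path partition function `D_{2n}(a)` for complex `a`. -/
noncomputable def dyckPFC (n : ℕ) (a : ℂ) : ℂ :=
  ∑ ℓ ∈ Finset.range (n + 1),
    ((2 * ℓ + 1 : ℂ) / (n + ℓ + 1)) * (Nat.choose (2 * n) (n + ℓ) : ℂ) * (a - 1) ^ ℓ

section aux
open Topology Nat
/-- real coefficient -/
noncomputable def Rcoef (ℓ n : ℕ) : ℝ :=
  ((2 * ℓ + 1 : ℝ) / (n + ℓ + 1)) * ((2 * n).choose (n + ℓ) : ℝ) * Real.sqrt (π * n ^ 3) / 4 ^ n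

lemma sqrt_cube (n : ℕ) : Real.sqrt (π * n ^ 3) = Real.sqrt (π * n) * n := by
  rw [show π * (n:ℝ) ^ 3 = (π * n) * (n:ℝ)^2 by ring, Real.sqrt_mul (by positivity),
    Real.sqrt_sq (by positivity)]

lemma Rcoef_eq (ℓ n : ℕ) : Rcoef ℓ n =
    (2 * ℓ + 1 : ℝ) * (((2 * n).choose (n + ℓ) : ℝ) * Real.sqrt (π * n) / 4 ^ n)
      * ((n : ℝ) / ((n:ℝ) + ℓ + 1)) := by
  rw [Rcoef, sqrt_cube]; ring

lemma Rcoef_tendsto (ℓ : ℕ) : Tendsto (fun n => Rcoef ℓ n) atTop (𝓝 (2 * ℓ + 1)) := by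
  have h2 : Tendsto (fun n : ℕ => (n : ℝ) / ((n:ℝ) + ℓ + 1)) atTop (𝓝 1) := by
    have := ratio_tendsto 0 ((ℓ:ℝ) + 1)
    refine this.congr (fun n => by rw [add_zero, add_assoc])
  have h := ((choose_asym ℓ).const_mul (2 * (ℓ:ℝ) + 1)).mul h2
  rw [mul_one, mul_one] at h
  exact h.congr fun n => (Rcoef_eq ℓ n).symm

lemma Rcoef_nonneg (ℓ n : ℕ) : 0 ≤ Rcoef ℓ n := by
  rw [Rcoef]; positivity

lemma Rcoef_bound : ∃ M : ℝ, 0 ≤ M ∧ ∀ ℓ n, Rcoef ℓ n ≤ (2 * ℓ + 1) * M := by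
  obtain ⟨M, hM⟩ := central_asym.bddAbove_range
  refine ⟨max M 0, le_max_right _ _, fun ℓ n => ?_⟩
  have h1 : ((2 * n).choose n : ℝ) * Real.sqrt (π * n) / 4 ^ n ≤ max M 0 :=
    le_trans (hM (Set.mem_range_self n)) (le_max_left _ _)
  have h2 : ((2 * n).choose (n + ℓ) : ℝ) ≤ ((2 * n).choose n : ℝ) := by
    have := Nat.choose_le_middle (n + ℓ) (2 * n)
    rw [show 2 * n / 2 = n by omega] at this
    exact_mod_cast this
  have h3 : ((2 * n).choose (n + ℓ) : ℝ) * Real.sqrt (π * n) / 4 ^ n ≤ max M 0 := by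
    refine le_trans ?_ h1
    gcongr
  have h4 : (n : ℝ) / ((n:ℝ) + ℓ + 1) ≤ 1 := by
    rw [div_le_one (by positivity)]; push_cast; linarith
  rw [Rcoef_eq]
  calc (2 * ℓ + 1 : ℝ) * (((2 * n).choose (n + ℓ) : ℝ) * Real.sqrt (π * n) / 4 ^ n)
        * ((n : ℝ) / ((n:ℝ) + ℓ + 1))
      ≤ (2 * ℓ + 1 : ℝ) * (max M 0) * 1 := by
        have hnn : (0:ℝ) ≤ ((2 * n).choose (n + ℓ) : ℝ) * Real.sqrt (π * n) / 4 ^ n := by positivity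
        gcongr
    _ = (2 * ℓ + 1 : ℝ) * max M 0 := by ring

theorem dyckPF_asymptotics_desorbed (a : ℂ) (ha : ‖a - 1‖ < 1) :
    Tendsto (fun n : ℕ => dyckPFC n a * (Real.sqrt (π * n ^ 3) : ℂ) / 4 ^ n) atTop
      (nhds (a / (a - 2) ^ 2)) := by
  unfold dyckPFC
  have hz2 : (2 : ℂ) - a ≠ 0 := by
    intro h
    have h2 : a = 2 := by linear_combination -h
    rw [h2] at ha; norm_num at ha
  have hz2' : a - 2 ≠ 0 := fun h => hz2 (by linear_combination -h)
  set z : ℂ := a - 1 with hzdef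
  have hz : ‖z‖ < 1 := ha
  set f : ℕ → ℕ → ℂ := fun n ℓ => if ℓ ≤ n then (Rcoef ℓ n : ℂ) * z ^ ℓ else 0 with hf
  -- the complex coefficient in dyckPFC equals the cast of Rcoef
  have hcast : ∀ n ℓ : ℕ, ((2 * ℓ + 1 : ℂ) / (n + ℓ + 1)) * (Nat.choose (2 * n) (n + ℓ) : ℂ)
      * (Real.sqrt (π * n ^ 3) : ℂ) / 4 ^ n = (Rcoef ℓ n : ℂ) := by
    intro n ℓ
    rw [Rcoef]
    push_cast
    ring
  -- step A : identify with tsum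
  have hA : ∀ n : ℕ, (∑ ℓ ∈ Finset.range (n + 1),
      ((2 * ℓ + 1 : ℂ) / (n + ℓ + 1)) * (Nat.choose (2 * n) (n + ℓ) : ℂ) * z ^ ℓ)
      * (Real.sqrt (π * n ^ 3) : ℂ) / 4 ^ n = ∑' ℓ, f n ℓ := by
    intro n
    rw [tsum_eq_sum (s := Finset.range (n+1))
      (by intro ℓ hℓ; simp only [hf]; rw [if_neg]; simpa using hℓ)]
    rw [Finset.sum_mul, Finset.sum_div]
    refine Finset.sum_congr rfl fun ℓ hℓ => ?_
    have hln : ℓ ≤ n := by simpa [Nat.lt_succ_iff] using hℓ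
    simp only [hf, if_pos hln]
    rw [← hcast n ℓ]
    ring
  -- limits
  have hB : ∀ ℓ : ℕ, Tendsto (fun n => f n ℓ) atTop (𝓝 ((2 * ℓ + 1 : ℂ) * z ^ ℓ)) := by
    intro ℓ
    have h1 : Tendsto (fun n => ((Rcoef ℓ n : ℝ) : ℂ)) atTop (𝓝 ((2 * ℓ + 1 : ℝ) : ℂ)) :=
      (Complex.continuous_ofReal.tendsto _).comp (Rcoef_tendsto ℓ)
    have h2 := h1.mul_const (z ^ ℓ)
    have h3 : ((2 * ℓ + 1 : ℝ) : ℂ) * z ^ ℓ = (2 * ℓ + 1 : ℂ) * z ^ ℓ := by push_cast; ring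
    rw [h3] at h2
    refine h2.congr' ?_
    filter_upwards [eventually_ge_atTop ℓ] with n hn
    simp only [hf, if_pos hn]
  -- bound
  obtain ⟨M, hM0, hM⟩ := Rcoef_bound
  have hbd : ∀ n ℓ, ‖f n ℓ‖ ≤ (2 * ℓ + 1) * M * ‖z‖ ^ ℓ := by
    intro n ℓ
    simp only [hf]
    split
    · rw [norm_mul, norm_pow, Complex.norm_real, Real.norm_of_nonneg (Rcoef_nonneg ℓ n)]
      gcongr
      exact hM ℓ n
    · simp; positivity
  have hsum : Summable (fun ℓ : ℕ => (2 * (ℓ:ℝ) + 1) * M * ‖z‖ ^ ℓ) := by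
    have hzn : ‖(‖z‖ : ℝ)‖ < 1 := by rwa [Real.norm_eq_abs, abs_of_nonneg (norm_nonneg z)]
    have s1 : Summable (fun ℓ : ℕ => (ℓ:ℝ) * ‖z‖ ^ ℓ) := by
      have := summable_pow_mul_geometric_of_norm_lt_one 1 hzn
      simpa using this
    have s2 : Summable (fun ℓ : ℕ => ‖z‖ ^ ℓ) :=
      summable_geometric_of_lt_one (norm_nonneg z) hz
    have := ((s1.mul_left 2).add s2).mul_left M
    refine this.congr fun ℓ => by ring
  -- limit sum value
  have hg1 : Summable (fun ℓ : ℕ => (ℓ:ℂ) * z ^ ℓ) := by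
    have := summable_pow_mul_geometric_of_norm_lt_one 1 hz
    simpa using this
  have hg2 : Summable (fun ℓ : ℕ => z ^ ℓ) := summable_geometric_of_norm_lt_one hz
  have hD : ∑' ℓ : ℕ, (2 * ℓ + 1 : ℂ) * z ^ ℓ = a / (a - 2) ^ 2 := by
    have e1 : ∀ ℓ : ℕ, (2 * ℓ + 1 : ℂ) * z ^ ℓ = 2 * ((ℓ:ℂ) * z ^ ℓ) + z ^ ℓ := fun ℓ => by ring
    rw [tsum_congr e1, Summable.tsum_add (hg1.mul_left 2) hg2, tsum_mul_left,
      tsum_coe_mul_geometric_of_norm_lt_one hz, tsum_geometric_of_norm_lt_one hz]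
    have h1z : (1 : ℂ) - z = 2 - a := by rw [hzdef]; ring
    rw [h1z]
    field_simp
    ring
  have := tendsto_tsum_of_dominated_convergence hsum hB
    (Eventually.of_forall fun n => hbd n)
  rw [hD] at this
  exact Tendsto.congr (fun n => (hA n).symm) this

end aux
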